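/- arXiv:1905.05853 — 5 statements merged into one kernel-verified Lean document; each statement's English description precedes it below -/
import Mathlib

section
/- Let V be a real separable Hilbert space, let N, m, s be positive integers, and let A be an m×N real matrix satisfying (1−δ)‖x‖₂² ≤ ‖Ax‖₂² ≤ (1+δ)‖x‖₂² for all s-sparse x ∈ ℝ^N, where 0 ≤ δ < 1. Then the same two-sided bound holds for Hilbert-valued vectors: for every z ∈ V^N with at most s nonzero components, (1−δ)‖z‖²_{V,2} ≤ ‖Az‖²_{V,2} ≤ (1+δ)‖z‖²_{V,2}. -/
open scoped BigOperators
open Filter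

variable {V : Type*}

noncomputable def mnorm1 [NormedAddCommGroup V] {N : ℕ} (z : Fin N → V) : ℝ := ∑ j, ‖z j‖

noncomputable def mnorm2 [NormedAddCommGroup V] {N : ℕ} (z : Fin N → V) : ℝ :=
  Real.sqrt (∑ j, ‖z j‖ ^ 2)

def matVec [NormedAddCommGroup V] [Module ℝ V] {m N : ℕ}
    (A : Matrix (Fin m) (Fin N) ℝ) (z : Fin N → V) : Fin m → V :=
  fun i => ∑ j, A i j • z j

def matVecT [NormedAddCommGroup V] [Module ℝ V] {m N : ℕ}
    (A : Matrix (Fin m) (Fin N) ℝ) (v : Fin m → V) : Fin N → V :=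
  fun j => ∑ i, A i j • v i

def IsSparse [Zero V] {N : ℕ} (s : ℕ) (z : Fin N → V) : Prop :=
  ∃ S : Finset (Fin N), S.card ≤ s ∧ ∀ j ∉ S, z j = 0

def restrict [Zero V] {N : ℕ} (S : Finset (Fin N)) (z : Fin N → V) : Fin N → V :=
  fun j => if j ∈ S then z j else 0

noncomputable def softThresh [NormedAddCommGroup V] [Module ℝ V] (τ : ℝ) (x : V) : V :=
  (max (‖x‖ - τ) 0 / ‖x‖) • x

noncomputable def Sop [NormedAddCommGroup V] [Module ℝ V] {m N : ℕ}
    (τ : ℝ) (A : Matrix (Fin m) (Fin N) ℝ) (u : Fin m → V) (z : Fin N → V) : Fin N → V :=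
  fun j => softThresh τ ((z - τ • matVecT A (matVec A z - u)) j)

noncomputable def specNorm {N : ℕ} (M : Matrix (Fin N) (Fin N) ℝ) : ℝ :=
  ‖(Matrix.toEuclideanCLM (𝕜 := ℝ) M : EuclideanSpace ℝ (Fin N) →L[ℝ] EuclideanSpace ℝ (Fin N))‖

/-- the RIP for `s`-sparse real vectors extends to `s`-sparse Hilbert-valued
vectors with the same constant. -/
theorem rip_extends_to_hilbert_valued
    [NormedAddCommGroup V] [InnerProductSpace ℝ V] [CompleteSpace V]
    [TopologicalSpace.SeparableSpace V]
    {N m s : ℕ} (hN : 0 < N) (hm : 0 < m) (hs : 0 < s)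
    (A : Matrix (Fin m) (Fin N) ℝ) (δ : ℝ) (hδ0 : 0 ≤ δ) (hδ1 : δ < 1)
    (hRIP : ∀ x : Fin N → ℝ, IsSparse s x →
      (1 - δ) * (∑ j, x j ^ 2) ≤ ∑ i, (∑ j, A i j * x j) ^ 2 ∧
        ∑ i, (∑ j, A i j * x j) ^ 2 ≤ (1 + δ) * (∑ j, x j ^ 2))
    (z : Fin N → V) (hz : IsSparse s z) :
    (1 - δ) * mnorm2 z ^ 2 ≤ mnorm2 (matVec A z) ^ 2 ∧
      mnorm2 (matVec A z) ^ 2 ≤ (1 + δ) * mnorm2 z ^ 2 := by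
  obtain ⟨S, hScard, hS⟩ := hz
  haveI : FiniteDimensional ℝ (Submodule.span ℝ (Set.range z)) :=
    FiniteDimensional.span_of_finite ℝ (Set.finite_range z)
  set W : Submodule ℝ V := Submodule.span ℝ (Set.range z) with hW
  haveI : FiniteDimensional ℝ W := by rw [hW]; infer_instance
  set d := Module.finrank ℝ W
  let b : OrthonormalBasis (Fin d) ℝ W := stdOrthonormalBasis ℝ W
  have hzW : ∀ j, z j ∈ W := fun j => Submodule.subset_span ⟨j, rfl⟩
  set w : Fin N → W := fun j => ⟨z j, hzW j⟩ with hw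
  set c : Fin N → Fin d → ℝ := fun j => (b.repr (w j) : EuclideanSpace ℝ (Fin d)) with hc
  have euclid_norm : ∀ v : EuclideanSpace ℝ (Fin d), ‖v‖ ^ 2 = ∑ k, (v k) ^ 2 := by
    intro v
    rw [EuclideanSpace.norm_eq, Real.sq_sqrt (by positivity)]
    simp [sq_abs]
  have hnormc : ∀ j, ‖z j‖ ^ 2 = ∑ k, (c j k) ^ 2 := by
    intro j
    have h1 : ‖z j‖ = ‖w j‖ := rfl
    rw [h1, ← b.repr.norm_map (w j), euclid_norm]
  have hAz : ∀ i, ‖(matVec A z) i‖ ^ 2 = ∑ k, (∑ j, A i j * c j k) ^ 2 := by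
    intro i
    have h1 : (matVec A z) i = ((∑ j, A i j • w j : W) : V) := by
      simp [matVec, hw]
    have h2 : ‖(matVec A z) i‖ = ‖(∑ j, A i j • w j : W)‖ := by
      rw [h1]; rfl
    rw [h2, ← b.repr.norm_map, euclid_norm]
    congr 1
    ext k
    congr 1
    rw [map_sum]
    simp only [map_smul]
    rw [WithLp.ofLp_sum, Finset.sum_apply]
    simp [hc]
  have hcsparse : ∀ k, IsSparse s (fun j => c j k) := by
    intro k
    refine ⟨S, hScard, fun j hj => ?_⟩
    have hzj : z j = 0 := hS j hj
    have : w j = 0 := Subtype.ext (by simp [hw, hzj])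
    simp [hc, this]
  have hz2 : mnorm2 z ^ 2 = ∑ k, ∑ j, (c j k) ^ 2 := by
    rw [mnorm2, Real.sq_sqrt (by positivity)]
    rw [Finset.sum_comm]
    exact Finset.sum_congr rfl fun j _ => hnormc j
  have hAz2 : mnorm2 (matVec A z) ^ 2 = ∑ k, ∑ i, (∑ j, A i j * c j k) ^ 2 := by
    rw [mnorm2, Real.sq_sqrt (by positivity)]
    rw [Finset.sum_comm]
    exact Finset.sum_congr rfl fun i _ => hAz i
  rw [hz2, hAz2]
  constructor
  · rw [Finset.mul_sum]
    exact Finset.sum_le_sum fun k _ => (hRIP (fun j => c j k) (hcsparse k)).1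
  · rw [Finset.mul_sum]
    exact Finset.sum_le_sum fun k _ => (hRIP (fun j => c j k) (hcsparse k)).2
end

section
/- Let V be a real separable Hilbert space, let N, m, s be positive integers, and let A be an m×N real matrix satisfying the ℓ_{V,2}-robust null space property of order s with constants ρ ∈ (0,1) and τ > 0. Then for all c, z ∈ V^N, ‖z − c‖_{V,2} ≤ (C/√s)(‖z‖_{V,1} − ‖c‖_{V,1} + 2σ_s(c)_{V,1}) + D‖A(z − c)‖_{V,2}, where C = (1+ρ)²/(1−ρ) and D = (3+ρ)τ/(1−ρ). -/
open scoped BigOperators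
open Filter

variable {V : Type*}

/-- Best `s`-term approximation error of `c` in the `‖·‖_{V,1}` norm. -/
noncomputable def sigmaS [NormedAddCommGroup V] {N : ℕ} (s : ℕ) (c : Fin N → V) : ℝ :=
  sInf ((fun w => mnorm1 (c - w)) '' {w : Fin N → V | IsSparse s w})

/-- The `ℓ_{V,2}`-robust null space property of order `s` with constants `ρ` and `τ`. -/
def RobustNSP (V : Type*) [NormedAddCommGroup V] [InnerProductSpace ℝ V] {m N : ℕ}
    (A : Matrix (Fin m) (Fin N) ℝ) (s : ℕ) (ρ τ : ℝ) : Prop :=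
  ∀ (z : Fin N → V) (S : Finset (Fin N)), S.card ≤ s →
    mnorm2 (restrict S z) ≤ ρ / Real.sqrt s * mnorm1 (restrict Sᶜ z) + τ * mnorm2 (matVec A z)

lemma mnorm1_restrict [NormedAddCommGroup V] {N : ℕ} (S : Finset (Fin N)) (v : Fin N → V) :
    mnorm1 (restrict S v) = ∑ j ∈ S, ‖v j‖ := by
  simp [mnorm1, restrict, apply_ite norm, Finset.sum_ite_mem]

lemma mnorm2_restrict [NormedAddCommGroup V] {N : ℕ} (S : Finset (Fin N)) (v : Fin N → V) :
    mnorm2 (restrict S v) = Real.sqrt (∑ j ∈ S, ‖v j‖ ^ 2) := by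
  have : ∀ j, ‖restrict S v j‖ ^ 2 = if j ∈ S then ‖v j‖ ^ 2 else 0 := by
    intro j; simp [restrict, apply_ite norm, apply_ite (· ^ 2)]
  simp [mnorm2, this, Finset.sum_ite_mem]

lemma mnorm1_nonneg [NormedAddCommGroup V] {N : ℕ} (v : Fin N → V) : 0 ≤ mnorm1 v :=
  Finset.sum_nonneg fun _ _ => norm_nonneg _

lemma mnorm2_nonneg [NormedAddCommGroup V] {N : ℕ} (v : Fin N → V) : 0 ≤ mnorm2 v :=
  Real.sqrt_nonneg _

lemma mnorm1_split [NormedAddCommGroup V] {N : ℕ} (S : Finset (Fin N)) (v : Fin N → V) :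
    mnorm1 v = mnorm1 (restrict S v) + mnorm1 (restrict Sᶜ v) := by
  rw [mnorm1_restrict, mnorm1_restrict, mnorm1]
  rw [← Finset.sum_add_sum_compl S fun j => ‖v j‖]

lemma sqrt_add_le (a b : ℝ) (ha : 0 ≤ a) (hb : 0 ≤ b) :
    Real.sqrt (a + b) ≤ Real.sqrt a + Real.sqrt b := by
  have h : a + b ≤ (Real.sqrt a + Real.sqrt b) ^ 2 := by
    nlinarith [Real.sq_sqrt ha, Real.sq_sqrt hb, Real.sqrt_nonneg a, Real.sqrt_nonneg b]
  calc Real.sqrt (a + b) ≤ Real.sqrt ((Real.sqrt a + Real.sqrt b) ^ 2) := Real.sqrt_le_sqrt h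
    _ = Real.sqrt a + Real.sqrt b := Real.sqrt_sq (by positivity)

lemma mnorm2_split [NormedAddCommGroup V] {N : ℕ} (S : Finset (Fin N)) (v : Fin N → V) :
    mnorm2 v ≤ mnorm2 (restrict S v) + mnorm2 (restrict Sᶜ v) := by
  rw [mnorm2_restrict, mnorm2_restrict, mnorm2,
    ← Finset.sum_add_sum_compl S fun j => ‖v j‖ ^ 2]
  exact sqrt_add_le _ _ (Finset.sum_nonneg fun _ _ => sq_nonneg _)
    (Finset.sum_nonneg fun _ _ => sq_nonneg _)

lemma cs_bound [NormedAddCommGroup V] {N : ℕ} (S : Finset (Fin N)) (v : Fin N → V) :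
    mnorm1 (restrict S v) ≤ Real.sqrt S.card * mnorm2 (restrict S v) := by
  rw [mnorm1_restrict, mnorm2_restrict]
  have h := Finset.sum_mul_sq_le_sq_mul_sq S (fun _ => (1 : ℝ)) (fun j => ‖v j‖)
  simp only [one_mul, one_pow, Finset.sum_const, nsmul_eq_mul, mul_one] at h
  have h1 : (∑ j ∈ S, ‖v j‖) = Real.sqrt ((∑ j ∈ S, ‖v j‖) ^ 2) :=
    (Real.sqrt_sq (Finset.sum_nonneg fun _ _ => norm_nonneg _)).symm
  rw [h1, ← Real.sqrt_mul (Nat.cast_nonneg _)]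
  exact Real.sqrt_le_sqrt h

lemma exists_topset {N : ℕ} (f : Fin N → ℝ) (s : ℕ) :
    ∃ S : Finset (Fin N), S.card = min s N ∧ ∀ i ∈ S, ∀ j ∉ S, f j ≤ f i := by
  induction s with
  | zero => exact ⟨∅, by simp, by simp⟩
  | succ s ih =>
    obtain ⟨S, hcard, htop⟩ := ih
    rcases le_or_gt N s with hNs | hsN
    · have hSu : S = Finset.univ := by
        apply Finset.eq_univ_of_card
        simp [hcard, Nat.min_eq_right hNs, Fintype.card_fin]
      refine ⟨S, ?_, htop⟩
      simp [hSu, Fintype.card_fin, Nat.min_eq_right (le_trans hNs (Nat.le_succ s))]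
    · have hcs : S.card = s := by simp [hcard, Nat.min_eq_left hsN.le]
      have hne : Sᶜ.Nonempty := by
        rw [← Finset.card_pos, Finset.card_compl, Fintype.card_fin, hcs]
        omega
      obtain ⟨i₀, hi₀, hmax⟩ := Finset.exists_max_image Sᶜ f hne
      have hi₀S : i₀ ∉ S := Finset.mem_compl.mp hi₀
      refine ⟨insert i₀ S, ?_, ?_⟩
      · rw [Finset.card_insert_of_notMem hi₀S, hcs, Nat.min_eq_left (by omega)]
      · intro i hi j hj
        have hjS : j ∉ S := fun h => hj (Finset.mem_insert_of_mem h)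
        rcases Finset.mem_insert.mp hi with rfl | hiS
        · exact hmax j (Finset.mem_compl.mpr hjS)
        · exact htop i hiS j hjS

lemma stechkin [NormedAddCommGroup V] {N : ℕ} {s : ℕ} (hs : 0 < s) (v : Fin N → V)
    (S : Finset (Fin N)) (hcard : S.card = min s N)
    (htop : ∀ i ∈ S, ∀ j ∉ S, ‖v j‖ ≤ ‖v i‖) :
    mnorm2 (restrict Sᶜ v) ≤ mnorm1 v / Real.sqrt s := by
  rcases le_or_gt N s with hNs | hsN
  · have hSu : S = Finset.univ := by
      apply Finset.eq_univ_of_card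
      simp [hcard, Nat.min_eq_right hNs, Fintype.card_fin]
    rw [hSu, Finset.compl_univ, mnorm2_restrict]
    simp only [Finset.sum_empty, Real.sqrt_zero]
    exact div_nonneg (mnorm1_nonneg v) (Real.sqrt_nonneg _)
  · have hcs : S.card = s := by simp [hcard, Nat.min_eq_left hsN.le]
    have hspos : (0:ℝ) < s := by exact_mod_cast hs
    have key : ∀ j ∈ Sᶜ, ‖v j‖ ≤ mnorm1 v / s := by
      intro j hj
      rw [le_div_iff₀ hspos]
      calc ‖v j‖ * s = ∑ _i ∈ S, ‖v j‖ := by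
            rw [Finset.sum_const, hcs, nsmul_eq_mul]; ring
        _ ≤ ∑ i ∈ S, ‖v i‖ :=
            Finset.sum_le_sum fun i hi => htop i hi j (Finset.mem_compl.mp hj)
        _ ≤ mnorm1 v :=
            Finset.sum_le_sum_of_subset_of_nonneg (Finset.subset_univ S)
              fun _ _ _ => norm_nonneg _
    have hsum : ∑ j ∈ Sᶜ, ‖v j‖ ^ 2 ≤ mnorm1 v ^ 2 / s := by
      calc ∑ j ∈ Sᶜ, ‖v j‖ ^ 2 ≤ ∑ j ∈ Sᶜ, (mnorm1 v / s) * ‖v j‖ := by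
            refine Finset.sum_le_sum fun j hj => ?_
            have h1 := key j hj
            nlinarith [norm_nonneg (v j)]
        _ = (mnorm1 v / s) * ∑ j ∈ Sᶜ, ‖v j‖ := by rw [Finset.mul_sum]
        _ ≤ (mnorm1 v / s) * mnorm1 v := by
            refine mul_le_mul_of_nonneg_left ?_
              (div_nonneg (mnorm1_nonneg v) hspos.le)
            exact Finset.sum_le_sum_of_subset_of_nonneg (Finset.subset_univ _)
              fun _ _ _ => norm_nonneg _
        _ = mnorm1 v ^ 2 / s := by ring
    rw [mnorm2_restrict]
    calc Real.sqrt (∑ j ∈ Sᶜ, ‖v j‖ ^ 2) ≤ Real.sqrt (mnorm1 v ^ 2 / s) :=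
          Real.sqrt_le_sqrt hsum
      _ = mnorm1 v / Real.sqrt s := by
          rw [Real.sqrt_div (sq_nonneg _), Real.sqrt_sq (mnorm1_nonneg v)]

lemma main_bound [NormedAddCommGroup V] [InnerProductSpace ℝ V] {N m s : ℕ} (hs : 0 < s)
    (A : Matrix (Fin m) (Fin N) ℝ) (ρ τ : ℝ) (hρ0 : 0 < ρ) (hρ1 : ρ < 1)
    (hNSP : RobustNSP V A s ρ τ) (c z w : Fin N → V) (hw : IsSparse s w) :
    mnorm2 (z - c) ≤
      (1 + ρ) ^ 2 / (1 - ρ) / Real.sqrt s *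
          (mnorm1 z - mnorm1 c + 2 * mnorm1 (c - w)) +
        (3 + ρ) * τ / (1 - ρ) * mnorm2 (matVec A (z - c)) := by
  set v : Fin N → V := z - c with hv
  set q : ℝ := Real.sqrt s with hqdef
  have hq : 0 < q := Real.sqrt_pos.mpr (by exact_mod_cast hs)
  set e : ℝ := mnorm2 (matVec A v) with he
  have he0 : 0 ≤ e := mnorm2_nonneg _
  have h1ρ : (0:ℝ) < 1 - ρ := by linarith
  obtain ⟨Sw, hSwcard, hSw0⟩ := hw
  have hsplit : mnorm1 v = mnorm1 (restrict Sw v) + mnorm1 (restrict Swᶜ v) := mnorm1_split Sw v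
  -- Step A : tail of c controlled by approximation error
  have hA : ∑ j ∈ Swᶜ, ‖c j‖ ≤ mnorm1 (c - w) := by
    calc ∑ j ∈ Swᶜ, ‖c j‖ = ∑ j ∈ Swᶜ, ‖(c - w) j‖ := by
          refine Finset.sum_congr rfl fun j hj => ?_
          rw [Pi.sub_apply, hSw0 j (Finset.mem_compl.mp hj), sub_zero]
      _ ≤ mnorm1 (c - w) :=
          Finset.sum_le_sum_of_subset_of_nonneg (Finset.subset_univ _)
            fun _ _ _ => norm_nonneg _
  -- Step B : cone-type inequality
  have hB : mnorm1 (restrict Swᶜ v) ≤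
      mnorm1 z - mnorm1 c + 2 * mnorm1 (c - w) + mnorm1 (restrict Sw v) := by
    rw [mnorm1_restrict, mnorm1_restrict]
    have hz : mnorm1 z = ∑ j ∈ Sw, ‖z j‖ + ∑ j ∈ Swᶜ, ‖z j‖ :=
      (Finset.sum_add_sum_compl Sw _).symm
    have hc : mnorm1 c = ∑ j ∈ Sw, ‖c j‖ + ∑ j ∈ Swᶜ, ‖c j‖ :=
      (Finset.sum_add_sum_compl Sw _).symm
    have h1 : ∑ j ∈ Sw, ‖c j‖ - ∑ j ∈ Sw, ‖v j‖ ≤ ∑ j ∈ Sw, ‖z j‖ := by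
      rw [← Finset.sum_sub_distrib]
      refine Finset.sum_le_sum fun j _ => ?_
      have h := norm_sub_le (z j) (v j)
      have hcj : c j = z j - v j := by simp [hv]
      rw [hcj]; linarith
    have h2 : ∑ j ∈ Swᶜ, ‖v j‖ - ∑ j ∈ Swᶜ, ‖c j‖ ≤ ∑ j ∈ Swᶜ, ‖z j‖ := by
      rw [← Finset.sum_sub_distrib]
      refine Finset.sum_le_sum fun j _ => ?_
      have hvj : v j = z j - c j := by simp [hv]
      have h := norm_sub_le (z j) (c j)
      rw [hvj]; linarith
    linarith
  -- Step C : NSP applied to the support of w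
  have hC : mnorm1 (restrict Sw v) ≤ ρ * mnorm1 (restrict Swᶜ v) + q * τ * e := by
    have h2S := hNSP v Sw hSwcard
    have hcard_le : Real.sqrt Sw.card ≤ q := by
      rw [hqdef]; exact Real.sqrt_le_sqrt (by exact_mod_cast hSwcard)
    have hm2 : 0 ≤ mnorm2 (restrict Sw v) := mnorm2_nonneg _
    have hstep : mnorm1 (restrict Sw v) ≤
        q * (ρ / q * mnorm1 (restrict Swᶜ v) + τ * e) := by
      calc mnorm1 (restrict Sw v) ≤ Real.sqrt Sw.card * mnorm2 (restrict Sw v) :=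
            cs_bound Sw v
        _ ≤ q * mnorm2 (restrict Sw v) := mul_le_mul_of_nonneg_right hcard_le hm2
        _ ≤ q * (ρ / q * mnorm1 (restrict Swᶜ v) + τ * e) :=
            mul_le_mul_of_nonneg_left h2S hq.le
    have hexp : q * (ρ / q * mnorm1 (restrict Swᶜ v) + τ * e) =
        ρ * mnorm1 (restrict Swᶜ v) + q * τ * e := by
      field_simp
    linarith
  -- combined ℓ¹ bound
  have hcone : (1 - ρ) * mnorm1 v ≤
      (1 + ρ) * (mnorm1 z - mnorm1 c + 2 * mnorm1 (c - w)) + 2 * q * τ * e := by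
    nlinarith [mul_le_mul_of_nonneg_left hB (show (0:ℝ) ≤ 1 + ρ by linarith), hC]
  -- Step D : ℓ² bound via set of largest entries
  obtain ⟨T, hTcard, hTtop⟩ := exists_topset (fun j => ‖v j‖) s
  have hTle : T.card ≤ s := hTcard ▸ min_le_left s N
  have hD1 := hNSP v T hTle
  have hD2 := stechkin hs v T hTcard hTtop
  have hD3 : mnorm1 (restrict Tᶜ v) ≤ mnorm1 v := by
    have := mnorm1_split T v
    have := mnorm1_nonneg (restrict T v)
    linarith
  have hmain2 : q * mnorm2 v ≤ (1 + ρ) * mnorm1 v + q * τ * e := by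
    have hT2 : mnorm2 (restrict T v) ≤ ρ / q * mnorm1 v + τ * e := by
      refine le_trans hD1 ?_
      have : ρ / q * mnorm1 (restrict Tᶜ v) ≤ ρ / q * mnorm1 v :=
        mul_le_mul_of_nonneg_left hD3 (by positivity)
      linarith
    have hstep : mnorm2 v ≤ ρ / q * mnorm1 v + τ * e + mnorm1 v / q := by
      have := mnorm2_split T v
      linarith
    have hmul := mul_le_mul_of_nonneg_left hstep hq.le
    have hexp : q * (ρ / q * mnorm1 v + τ * e + mnorm1 v / q) =
        ρ * mnorm1 v + q * τ * e + mnorm1 v := by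
      field_simp
    rw [hexp] at hmul
    linarith
  -- final combination
  have key : mnorm2 v * (q * (1 - ρ)) ≤
      (1 + ρ) ^ 2 * (mnorm1 z - mnorm1 c + 2 * mnorm1 (c - w)) + (3 + ρ) * q * τ * e := by
    nlinarith [mul_le_mul_of_nonneg_left hcone (show (0:ℝ) ≤ 1 + ρ by linarith),
      mul_le_mul_of_nonneg_left hmain2 h1ρ.le]
  have hpos : 0 < q * (1 - ρ) := mul_pos hq h1ρ
  calc mnorm2 v ≤
      ((1 + ρ) ^ 2 * (mnorm1 z - mnorm1 c + 2 * mnorm1 (c - w)) + (3 + ρ) * q * τ * e) /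
        (q * (1 - ρ)) := (le_div_iff₀ hpos).mpr key
    _ = (1 + ρ) ^ 2 / (1 - ρ) / q * (mnorm1 z - mnorm1 c + 2 * mnorm1 (c - w)) +
        (3 + ρ) * τ / (1 - ρ) * e := by
      field_simp

/-- error bound in `‖·‖_{V,2}` under the `ℓ_{V,2}`-robust NSP. -/
theorem lV2_error_bound_of_robust_nsp
    [NormedAddCommGroup V] [InnerProductSpace ℝ V] [CompleteSpace V]
    [TopologicalSpace.SeparableSpace V]
    {N m s : ℕ} (hN : 0 < N) (hm : 0 < m) (hs : 0 < s)
    (A : Matrix (Fin m) (Fin N) ℝ) (ρ τ : ℝ) (hρ0 : 0 < ρ) (hρ1 : ρ < 1) (hτ : 0 < τ)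
    (hNSP : RobustNSP V A s ρ τ) (c z : Fin N → V) :
    mnorm2 (z - c) ≤
      (1 + ρ) ^ 2 / (1 - ρ) / Real.sqrt s *
          (mnorm1 z - mnorm1 c + 2 * sigmaS s c) +
        (3 + ρ) * τ / (1 - ρ) * mnorm2 (matVec A (z - c)) := by
  have hq : 0 < Real.sqrt s := Real.sqrt_pos.mpr (by exact_mod_cast hs)
  have h1ρ : (0:ℝ) < 1 - ρ := by linarith
  have hC2 : (0:ℝ) < (1 + ρ) ^ 2 := by positivity
  have hKpos : (0:ℝ) < 2 * ((1 + ρ) ^ 2 / (1 - ρ) / Real.sqrt s) := by positivity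
  have hne : ((fun w => mnorm1 (c - w)) '' {w : Fin N → V | IsSparse s w}).Nonempty :=
    ⟨mnorm1 (c - 0), ⟨0, ⟨∅, by simp, fun j _ => rfl⟩, rfl⟩⟩
  have hsig : (mnorm2 (z - c) -
        ((1 + ρ) ^ 2 / (1 - ρ) / Real.sqrt s * (mnorm1 z - mnorm1 c) +
          (3 + ρ) * τ / (1 - ρ) * mnorm2 (matVec A (z - c)))) /
      (2 * ((1 + ρ) ^ 2 / (1 - ρ) / Real.sqrt s)) ≤ sigmaS s c := by
    refine le_csInf hne ?_
    rintro x ⟨w, hw, rfl⟩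
    rw [div_le_iff₀ hKpos]
    have hmb := main_bound hs A ρ τ hρ0 hρ1 hNSP c z w hw
    have hring : (1 + ρ) ^ 2 / (1 - ρ) / Real.sqrt s *
          (mnorm1 z - mnorm1 c + 2 * mnorm1 (c - w)) +
          (3 + ρ) * τ / (1 - ρ) * mnorm2 (matVec A (z - c)) =
        ((1 + ρ) ^ 2 / (1 - ρ) / Real.sqrt s * (mnorm1 z - mnorm1 c) +
          (3 + ρ) * τ / (1 - ρ) * mnorm2 (matVec A (z - c))) +
          mnorm1 (c - w) * (2 * ((1 + ρ) ^ 2 / (1 - ρ) / Real.sqrt s)) := by ring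
    linarith
  rw [div_le_iff₀ hKpos] at hsig
  have hring2 : (1 + ρ) ^ 2 / (1 - ρ) / Real.sqrt s *
        (mnorm1 z - mnorm1 c + 2 * sigmaS s c) +
        (3 + ρ) * τ / (1 - ρ) * mnorm2 (matVec A (z - c)) =
      ((1 + ρ) ^ 2 / (1 - ρ) / Real.sqrt s * (mnorm1 z - mnorm1 c) +
        (3 + ρ) * τ / (1 - ρ) * mnorm2 (matVec A (z - c))) +
        sigmaS s c * (2 * ((1 + ρ) ^ 2 / (1 - ρ) / Real.sqrt s)) := by ring
  linarith
end

section
/- Let V be a real Hilbert space, let N, m be positive integers, let A be an m×N real matrix, u ∈ V^m, and τ > 0. Define F : V^N → ℝ by F(z) := ‖z‖_{V,1} + (1/2)‖Az − u‖²_{V,2}, and define S_τ : V^N → V^N componentwise by S_τ(z)_j := J_τ((z − τA*(Az − u))_j), where J_τ is the soft-thresholding operator on V with threshold τ. Then x ∈ V^N minimizes F over V^N if and only if x is a fixed point of S_τ, i.e., S_τ(x) = x. -/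
open scoped BigOperators
open Filter

variable {V : Type*}

open scoped RealInnerProductSpace

section Aux
variable [NormedAddCommGroup V] [InnerProductSpace ℝ V]

lemma softThresh_subgrad {τ : ℝ} (hτ : 0 < τ) (y w : V) :
    ⟪y - softThresh τ y, w - softThresh τ y⟫ ≤ τ * (‖w‖ - ‖softThresh τ y‖) := by
  rcases le_or_gt ‖y‖ τ with h | h
  · have hp : softThresh τ y = 0 := by
      simp [softThresh, max_eq_right (sub_nonpos.mpr h)]
    rw [hp]
    simp only [sub_zero, norm_zero]
    have hiw := real_inner_le_norm y w
    nlinarith [norm_nonneg w]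
  · have hr : (0:ℝ) < ‖y‖ := lt_trans hτ h
    have hp : softThresh τ y = ((‖y‖ - τ)/‖y‖) • y := by
      simp [softThresh, max_eq_left (by linarith : (0:ℝ) ≤ ‖y‖ - τ)]
    have hnp : ‖softThresh τ y‖ = ‖y‖ - τ := by
      rw [hp, norm_smul, Real.norm_eq_abs, abs_of_nonneg (div_nonneg (by linarith) hr.le),
        div_mul_cancel₀ _ hr.ne']
    rw [hnp, hp]
    have key : ⟪y - ((‖y‖ - τ)/‖y‖) • y, w - ((‖y‖ - τ)/‖y‖) • y⟫ =
        (1 - (‖y‖-τ)/‖y‖) * ⟪y,w⟫ - (1 - (‖y‖-τ)/‖y‖)*((‖y‖-τ)/‖y‖)*‖y‖^2 := by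
      simp only [inner_sub_left, inner_sub_right, real_inner_smul_left, real_inner_smul_right,
        real_inner_comm y w]
      rw [real_inner_self_eq_norm_sq]
      ring
    rw [key]
    have h1 : (1 - (‖y‖-τ)/‖y‖) = τ/‖y‖ := by field_simp; ring
    have h2 : (τ/‖y‖)*((‖y‖-τ)/‖y‖)*‖y‖^2 = τ*(‖y‖-τ) := by field_simp
    have hiw := real_inner_le_norm y w
    have h3 : (τ/‖y‖) * ⟪y,w⟫ ≤ τ * ‖w‖ := by
      have := mul_le_mul_of_nonneg_left hiw (le_of_lt (div_pos hτ hr))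
      calc (τ/‖y‖) * ⟪y,w⟫ ≤ (τ/‖y‖) * (‖y‖ * ‖w‖) := this
        _ = τ * ‖w‖ := by field_simp
    rw [h1, h2]
    linarith

lemma softThresh_prox {τ : ℝ} (hτ : 0 < τ) (y w : V) :
    τ * ‖softThresh τ y‖ + (1/2) * ‖softThresh τ y - y‖^2 ≤ τ * ‖w‖ + (1/2) * ‖w - y‖^2 := by
  set p := softThresh τ y with hp
  have h1 := softThresh_subgrad hτ y w
  have h2 : ‖w - y‖^2 = ‖w - p‖^2 + 2*⟪w - p, p - y⟫ + ‖p - y‖^2 := by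
    have h := norm_add_sq_real (w - p) (p - y)
    rw [sub_add_sub_cancel] at h; exact h
  have h3 : ⟪w - p, p - y⟫ = - ⟪y - p, w - p⟫ := by
    have : p - y = -(y - p) := by abel
    rw [this, inner_neg_right, real_inner_comm]
  have h4 : ‖p - y‖^2 = ‖softThresh τ y - y‖^2 := by rw [hp]
  nlinarith [sq_nonneg ‖w - p‖]

lemma mnorm2_sq {M : ℕ} (v : Fin M → V) : mnorm2 v ^ 2 = ∑ i, ‖v i‖ ^ 2 :=
  Real.sq_sqrt (Finset.sum_nonneg fun i _ => sq_nonneg _)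

lemma adj_sum {m N : ℕ} (A : Matrix (Fin m) (Fin N) ℝ) (v : Fin m → V) (d : Fin N → V) :
    ∑ j, ⟪matVecT A v j, d j⟫ = ∑ i, ⟪v i, matVec A d i⟫ := by
  simp only [matVecT, matVec, sum_inner, inner_sum, real_inner_smul_left, real_inner_smul_right]
  rw [Finset.sum_comm]

lemma matVec_add {m N : ℕ} (A : Matrix (Fin m) (Fin N) ℝ) (x d : Fin N → V) (i : Fin m) :
    matVec A (x + d) i = matVec A x i + matVec A d i := by
  simp [matVec, smul_add, Finset.sum_add_distrib]

lemma matVec_smul {m N : ℕ} (A : Matrix (Fin m) (Fin N) ℝ) (t : ℝ) (d : Fin N → V) (i : Fin m) :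
    matVec A (t • d) i = t • matVec A d i := by
  simp [matVec, Finset.smul_sum, smul_comm t]

end Aux

set_option maxHeartbeats 1000000 in
/-- `x` minimizes `F(z) = ‖z‖_{V,1} + (1/2)‖Az − u‖²_{V,2}` iff `x` is a fixed
point of the forward-backward operator `S_τ`. -/
theorem minimizer_iff_fixed_point
    [NormedAddCommGroup V] [InnerProductSpace ℝ V] [CompleteSpace V]
    {N m : ℕ} (hN : 0 < N) (hm : 0 < m)
    (A : Matrix (Fin m) (Fin N) ℝ) (u : Fin m → V) (τ : ℝ) (hτ : 0 < τ)
    (x : Fin N → V) :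
    (∀ z : Fin N → V,
        mnorm1 x + (1 / 2) * mnorm2 (matVec A x - u) ^ 2 ≤
          mnorm1 z + (1 / 2) * mnorm2 (matVec A z - u) ^ 2) ↔
      Sop τ A u x = x := by
  classical
  set b : Fin m → V := matVec A x - u with hb
  set w : Fin N → V := matVecT A b with hw
  -- quadratic expansion
  have hQ : ∀ d : Fin N → V,
      mnorm2 (matVec A (x + d) - u) ^ 2
        = mnorm2 b ^ 2 + 2 * (∑ j, ⟪w j, d j⟫) + ∑ i, ‖matVec A d i‖ ^ 2 := by
    intro d
    rw [mnorm2_sq, mnorm2_sq, hw, adj_sum]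
    have e1 : ∀ i : Fin m, ‖(matVec A (x + d) - u) i‖ ^ 2
        = ‖b i‖ ^ 2 + 2 * ⟪b i, matVec A d i⟫ + ‖matVec A d i‖ ^ 2 := by
      intro i
      have hi : (matVec A (x + d) - u) i = b i + matVec A d i := by
        simp only [Pi.sub_apply, matVec_add, hb]
        abel
      rw [hi, norm_add_sq_real]
    rw [Finset.sum_congr rfl fun i _ => e1 i, Finset.sum_add_distrib, Finset.sum_add_distrib,
      ← Finset.mul_sum]
  -- pointwise: Sop applied to x
  have hSop : ∀ j, Sop τ A u x j = softThresh τ (x j - τ • w j) := by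
    intro j
    simp only [Sop, Pi.sub_apply, Pi.smul_apply, hw, hb]
  constructor
  · -- minimizer → fixed point
    intro hmin
    set p : Fin N → V := Sop τ A u x with hpdef
    set d : Fin N → V := p - x with hd
    set T : ℝ := ∑ j, ⟪w j, d j⟫ with hT
    set D : ℝ := ∑ i, ‖matVec A d i‖ ^ 2 with hD
    have hD0 : 0 ≤ D := Finset.sum_nonneg fun i _ => sq_nonneg _
    set c : ℝ := mnorm1 p - mnorm1 x + T with hc
    -- first-order condition: c ≥ 0
    have hstep : ∀ t : ℝ, 0 < t → t ≤ 1 → 0 ≤ c + t * D / 2 := by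
      intro t ht ht1
      have hz := hmin (x + t • d)
      have hQt := hQ (t • d)
      have hwT : ∑ j, ⟪w j, (t • d) j⟫ = t * T := by
        rw [hT, Finset.mul_sum]
        exact Finset.sum_congr rfl fun j _ => by
          simp [real_inner_smul_right]
      have hDt : ∑ i, ‖matVec A (t • d) i‖ ^ 2 = t ^ 2 * D := by
        rw [hD, Finset.mul_sum]
        exact Finset.sum_congr rfl fun i _ => by
          rw [matVec_smul, norm_smul, Real.norm_eq_abs, mul_pow, sq_abs]
      have hgconv : mnorm1 (x + t • d) ≤ (1 - t) * mnorm1 x + t * mnorm1 p := by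
        simp only [mnorm1]
        rw [Finset.mul_sum, Finset.mul_sum, ← Finset.sum_add_distrib]
        apply Finset.sum_le_sum
        intro j _
        have hxj : (x + t • d) j = (1 - t) • x j + t • p j := by
          simp only [Pi.add_apply, Pi.smul_apply, hd, Pi.sub_apply]
          module
        rw [hxj]
        calc ‖(1 - t) • x j + t • p j‖ ≤ ‖(1 - t) • x j‖ + ‖t • p j‖ := norm_add_le _ _
          _ = (1 - t) * ‖x j‖ + t * ‖p j‖ := by
              rw [norm_smul, norm_smul, Real.norm_eq_abs, Real.norm_eq_abs,
                abs_of_nonneg (by linarith), abs_of_nonneg ht.le]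
      rw [hQt, hwT, hDt] at hz
      have hbx : mnorm2 (matVec A x - u) ^ 2 = mnorm2 b ^ 2 := by rw [hb]
      rw [hbx] at hz
      have key : 0 ≤ t * c + t ^ 2 * D / 2 := by nlinarith [hz, hgconv]
      have : 0 ≤ t * (c + t * D / 2) := by ring_nf; ring_nf at key; linarith
      nlinarith [this, ht]
    have hc0 : 0 ≤ c := by
      by_contra hneg
      push_neg at hneg
      have ht0 : 0 < min 1 (-c / (D + 1)) := by
        apply lt_min one_pos
        apply div_pos (by linarith) (by linarith)
      have ht1 : min 1 (-c / (D + 1)) ≤ 1 := min_le_left _ _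
      have := hstep _ ht0 ht1
      have htle : min 1 (-c / (D + 1)) ≤ -c / (D + 1) := min_le_right _ _
      have hDd : min 1 (-c / (D + 1)) * D ≤ (-c / (D + 1)) * D :=
        mul_le_mul_of_nonneg_right htle hD0
      have hfrac : (-c / (D + 1)) * D ≤ -c := by
        rw [div_mul_eq_mul_div, div_le_iff₀ (by linarith)]
        nlinarith
      linarith
    -- prox inequality at each coordinate, summed
    have hprox : ∀ j : Fin N,
        τ * ‖p j‖ + (1/2) * ‖p j - (x j - τ • w j)‖ ^ 2 ≤
          τ * ‖x j‖ + (1/2) * ‖x j - (x j - τ • w j)‖ ^ 2 := by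
      intro j
      have := softThresh_prox hτ (x j - τ • w j) (x j)
      rw [← hSop j] at this
      exact this
    have hsum := Finset.sum_le_sum (fun j (_ : j ∈ Finset.univ) => hprox j)
    have hL : ∑ j, (τ * ‖p j‖ + (1/2) * ‖p j - (x j - τ • w j)‖ ^ 2)
        = τ * mnorm1 p + (1/2) * (∑ j, ‖d j‖ ^ 2) + τ * T + (τ^2/2) * ∑ j, ‖w j‖ ^ 2 := by
      have e : ∀ j : Fin N, τ * ‖p j‖ + (1/2) * ‖p j - (x j - τ • w j)‖ ^ 2
          = τ * ‖p j‖ + (1/2) * ‖d j‖ ^ 2 + τ * ⟪w j, d j⟫ + (τ^2/2) * ‖w j‖ ^ 2 := by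
        intro j
        have h1 : p j - (x j - τ • w j) = d j + τ • w j := by
          simp only [hd, Pi.sub_apply]; module
        rw [h1, norm_add_sq_real, real_inner_smul_right, norm_smul, Real.norm_eq_abs,
          abs_of_nonneg hτ.le, mul_pow, real_inner_comm]
        ring
      rw [Finset.sum_congr rfl fun j _ => e j]
      simp only [Finset.sum_add_distrib, Finset.mul_sum, mnorm1, hT]
    have hR : ∑ j, (τ * ‖x j‖ + (1/2) * ‖x j - (x j - τ • w j)‖ ^ 2)
        = τ * mnorm1 x + (τ^2/2) * ∑ j, ‖w j‖ ^ 2 := by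
      have e : ∀ j : Fin N, τ * ‖x j‖ + (1/2) * ‖x j - (x j - τ • w j)‖ ^ 2
          = τ * ‖x j‖ + (τ^2/2) * ‖w j‖ ^ 2 := by
        intro j
        have h1 : x j - (x j - τ • w j) = τ • w j := by module
        rw [h1, norm_smul, Real.norm_eq_abs, abs_of_nonneg hτ.le, mul_pow]
        ring
      rw [Finset.sum_congr rfl fun j _ => e j]
      simp only [Finset.sum_add_distrib, Finset.mul_sum, mnorm1]
    rw [hL, hR] at hsum
    have hdzero : ∑ j, ‖d j‖ ^ 2 ≤ 0 := by nlinarith [hsum, hc0, hτ]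
    have hdz : ∀ j : Fin N, d j = 0 := by
      intro j
      have hnn : ∀ j' ∈ (Finset.univ : Finset (Fin N)), (0:ℝ) ≤ ‖d j'‖ ^ 2 :=
        fun j' _ => sq_nonneg _
      have := Finset.sum_nonneg hnn
      have heq : ∑ j', ‖d j'‖ ^ 2 = 0 := le_antisymm hdzero this
      have := (Finset.sum_eq_zero_iff_of_nonneg hnn).mp heq j (Finset.mem_univ j)
      have : ‖d j‖ = 0 := by nlinarith [norm_nonneg (d j)]
      exact norm_eq_zero.mp this
    funext j
    have := hdz j
    simp only [hd, Pi.sub_apply, sub_eq_zero] at this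
    exact this
  · -- fixed point → minimizer
    intro hfix z
    set d : Fin N → V := z - x with hd
    have hzd : z = x + d := by funext j; simp [hd]
    have hsub : ∀ j : Fin N, ⟪(x j - τ • w j) - x j, z j - x j⟫ ≤ τ * (‖z j‖ - ‖x j‖) := by
      intro j
      have h := softThresh_subgrad hτ (x j - τ • w j) (z j)
      have hfx : softThresh τ (x j - τ • w j) = x j := by rw [← hSop j, hfix]
      rw [hfx] at h
      exact h
    have hsum := Finset.sum_le_sum (fun j (_ : j ∈ Finset.univ) => hsub j)
    have hLs : ∑ j, ⟪(x j - τ • w j) - x j, z j - x j⟫ = -τ * ∑ j, ⟪w j, d j⟫ := by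
      rw [Finset.mul_sum]
      apply Finset.sum_congr rfl
      intro j _
      have h1 : (x j - τ • w j) - x j = (-τ) • w j := by module
      rw [h1, real_inner_smul_left]
      have : z j - x j = d j := by simp [hd]
      rw [this]
    have hRs : ∑ j, (τ * (‖z j‖ - ‖x j‖)) = τ * (mnorm1 z - mnorm1 x) := by
      simp only [mnorm1, mul_sub, Finset.mul_sum, Finset.sum_sub_distrib]
    rw [hLs, hRs] at hsum
    have hT0 : -(∑ j, ⟪w j, d j⟫) ≤ mnorm1 z - mnorm1 x := by
      have := hsum
      nlinarith [hτ]
    have hQd := hQ d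
    rw [hzd, hQd]
    have hD0 : 0 ≤ ∑ i, ‖matVec A d i‖ ^ 2 := Finset.sum_nonneg fun i _ => sq_nonneg _
    have hbx : mnorm2 (matVec A x - u) ^ 2 = mnorm2 b ^ 2 := by rw [hb]
    rw [hbx]
    have hmz : mnorm1 (x + d) = mnorm1 z := by rw [← hzd]
    nlinarith [hT0, hD0, hmz]
end

section
/- Let V be a real Hilbert space, let N, m be positive integers, let A be an m×N real matrix, u ∈ V^m, and 0 < τ < 2/‖AᵀA‖₂. Let x* ∈ V^N be any minimizer of F(z) := ‖z‖_{V,1} + (1/2)‖Az − u‖²_{V,2}, and let (x^k) be generated by x^{k+1} = S_τ(x^k) from any x⁰ ∈ V^N, where S_τ(z)_j := J_τ((z − τA*(Az − u))_j). Then the sequence is Fejér monotone with respect to x*: ‖x^{k+1} − x*‖_{V,2} ≤ ‖x^k − x*‖_{V,2} for every k ≥ 0. -/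
open scoped BigOperators
open Filter

variable {V : Type*}

section FBScalar

open Matrix
open scoped RealInnerProductSpace


lemma fb_dot_bridge {N : ℕ} (a b : Fin N → ℝ) :
    ⟪(WithLp.equiv 2 (Fin N → ℝ)).symm a, (WithLp.equiv 2 (Fin N → ℝ)).symm b⟫ = a ⬝ᵥ b := by
  simp [PiLp.inner_apply, RCLike.inner_apply, dotProduct, mul_comm]

lemma fb_norm_sq_bridge {N : ℕ} (a : Fin N → ℝ) :
    ‖(WithLp.equiv 2 (Fin N → ℝ)).symm a‖ ^ 2 = a ⬝ᵥ a := by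
  rw [← fb_dot_bridge a a, real_inner_self_eq_norm_sq]

lemma fb_dot_self_nonneg {N : ℕ} (a : Fin N → ℝ) : 0 ≤ a ⬝ᵥ a :=
  Finset.sum_nonneg fun i _ => mul_self_nonneg _

lemma fb_clm_bridge {N : ℕ} (S : Matrix (Fin N) (Fin N) ℝ) (z : Fin N → ℝ) :
    (Matrix.toEuclideanCLM (𝕜 := ℝ) S) ((WithLp.equiv 2 (Fin N → ℝ)).symm z)
      = (WithLp.equiv 2 (Fin N → ℝ)).symm (S *ᵥ z) := by
  exact Matrix.toEuclideanCLM_toLp S z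

lemma fb_bound {N : ℕ} (S : Matrix (Fin N) (Fin N) ℝ) (z : Fin N → ℝ) :
    z ⬝ᵥ (S *ᵥ z) ≤ specNorm S * (z ⬝ᵥ z) := by
  set z' := (WithLp.equiv 2 (Fin N → ℝ)).symm z
  have h1 : z ⬝ᵥ (S *ᵥ z) = ⟪z', (Matrix.toEuclideanCLM (𝕜 := ℝ) S) z'⟫ := by
    rw [fb_clm_bridge, fb_dot_bridge]
  have h2 := real_inner_le_norm z' ((Matrix.toEuclideanCLM (𝕜 := ℝ) S) z')
  have h3 := (Matrix.toEuclideanCLM (𝕜 := ℝ) S).le_opNorm z'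
  have h4 : z ⬝ᵥ z = ‖z'‖ ^ 2 := (fb_norm_sq_bridge z).symm
  have h5 : (0:ℝ) ≤ ‖z'‖ := norm_nonneg _
  rw [h1, h4]
  calc ⟪z', (Matrix.toEuclideanCLM (𝕜 := ℝ) S) z'⟫ ≤ ‖z'‖ * ‖(Matrix.toEuclideanCLM (𝕜 := ℝ) S) z'‖ := h2
    _ ≤ ‖z'‖ * (specNorm S * ‖z'‖) := by
        exact mul_le_mul_of_nonneg_left h3 h5
    _ = specNorm S * ‖z'‖ ^ 2 := by ring

lemma fb_norm_bound {N : ℕ} (S : Matrix (Fin N) (Fin N) ℝ) (z : Fin N → ℝ) :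
    (S *ᵥ z) ⬝ᵥ (S *ᵥ z) ≤ specNorm S ^ 2 * (z ⬝ᵥ z) := by
  set z' := (WithLp.equiv 2 (Fin N → ℝ)).symm z
  have h3 := (Matrix.toEuclideanCLM (𝕜 := ℝ) S).le_opNorm z'
  have h1 : (S *ᵥ z) ⬝ᵥ (S *ᵥ z) = ‖(Matrix.toEuclideanCLM (𝕜 := ℝ) S) z'‖ ^ 2 := by
    rw [← fb_norm_sq_bridge, fb_clm_bridge]
  have h4 : z ⬝ᵥ z = ‖z'‖ ^ 2 := (fb_norm_sq_bridge z).symm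
  rw [h1, h4]
  have hsn : specNorm S = ‖(Matrix.toEuclideanCLM (𝕜 := ℝ) S : EuclideanSpace ℝ (Fin N) →L[ℝ] EuclideanSpace ℝ (Fin N))‖ := rfl
  rw [hsn]
  have h5 := norm_nonneg ((Matrix.toEuclideanCLM (𝕜 := ℝ) S) z')
  nlinarith [norm_nonneg z', norm_nonneg (Matrix.toEuclideanCLM (𝕜 := ℝ) S : EuclideanSpace ℝ (Fin N) →L[ℝ] EuclideanSpace ℝ (Fin N))]

lemma fb_sym_move {N : ℕ} (S : Matrix (Fin N) (Fin N) ℝ) (hsym : Sᵀ = S)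
    (a b : Fin N → ℝ) : a ⬝ᵥ (S *ᵥ b) = (S *ᵥ a) ⬝ᵥ b := by
  rw [Matrix.dotProduct_mulVec, ← Matrix.mulVec_transpose, hsym]

lemma fb_key_euclid {N : ℕ} (S : Matrix (Fin N) (Fin N) ℝ) (hsym : Sᵀ = S)
    (hpos : ∀ z, 0 ≤ z ⬝ᵥ (S *ᵥ z)) (x : Fin N → ℝ) :
    (S *ᵥ x) ⬝ᵥ (S *ᵥ x) ≤ specNorm S * (x ⬝ᵥ (S *ᵥ x)) := by
  set c := specNorm S with hc
  have hc0 : 0 ≤ c := norm_nonneg _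
  set y := S *ᵥ x with hy
  set n2 := y ⬝ᵥ y with hn2
  have hn2nn : 0 ≤ n2 := fb_dot_self_nonneg y
  -- Cauchy-Schwarz for the form: (x ⬝ᵥ S y)^2 ≤ (x ⬝ᵥ S x)(y ⬝ᵥ S y)
  have hCS : (x ⬝ᵥ (S *ᵥ y)) ^ 2 ≤ (x ⬝ᵥ (S *ᵥ x)) * (y ⬝ᵥ (S *ᵥ y)) := by
    have hquad : ∀ t : ℝ, 0 ≤ (y ⬝ᵥ (S *ᵥ y)) * (t * t) + (2 * (x ⬝ᵥ (S *ᵥ y))) * t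
        + (x ⬝ᵥ (S *ᵥ x)) := by
      intro t
      have h := hpos (x + t • y)
      have hexp : (x + t • y) ⬝ᵥ (S *ᵥ (x + t • y)) =
          (y ⬝ᵥ (S *ᵥ y)) * (t * t) + (2 * (x ⬝ᵥ (S *ᵥ y))) * t + (x ⬝ᵥ (S *ᵥ x)) := by
        rw [Matrix.mulVec_add, Matrix.mulVec_smul]
        rw [add_dotProduct, dotProduct_add, dotProduct_add,
          smul_dotProduct, dotProduct_smul, dotProduct_smul]
        have : y ⬝ᵥ (S *ᵥ x) = x ⬝ᵥ (S *ᵥ y) := by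
          rw [fb_sym_move S hsym y x, dotProduct_comm]
        rw [this]; simp [smul_eq_mul]; ring
      linarith [hexp ▸ h]
    have hd := discrim_le_zero hquad
    rw [discrim] at hd
    nlinarith
  have hb : y ⬝ᵥ (S *ᵥ y) ≤ c * n2 := fb_bound S y
  have hmove : x ⬝ᵥ (S *ᵥ y) = n2 := by
    rw [fb_sym_move S hsym x y, ← hy, hn2]
  rw [hmove] at hCS
  rcases eq_or_lt_of_le hn2nn with h0 | h0
  · rw [← h0]; exact mul_nonneg hc0 (hpos x)
  · have h1 : n2 ^ 2 ≤ (x ⬝ᵥ (S *ᵥ x)) * (c * n2) := le_trans hCS (by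
      have := hpos x
      exact mul_le_mul_of_nonneg_left hb (hpos x))
    nlinarith

end FBScalar

section FBVector

open Matrix
open scoped RealInnerProductSpace

variable [NormedAddCommGroup V] [InnerProductSpace ℝ V]

noncomputable def fbQF {N : ℕ} (P : Matrix (Fin N) (Fin N) ℝ) (w : Fin N → V) : ℝ :=
  ∑ j, ∑ l, P j l * ⟪w j, w l⟫

noncomputable def fbIP {N : ℕ} (a b : Fin N → V) : ℝ := ∑ j, ⟪a j, b j⟫

def fbMap {N : ℕ} (P : Matrix (Fin N) (Fin N) ℝ) (w : Fin N → V) : Fin N → V :=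
  fun j => ∑ l, P j l • w l

lemma fb_ip_map_map {N : ℕ} (P Q : Matrix (Fin N) (Fin N) ℝ) (w : Fin N → V) :
    fbIP (fbMap P w) (fbMap Q w) = fbQF (Pᵀ * Q) w := by
  have expand : fbIP (fbMap P w) (fbMap Q w)
      = ∑ j, ∑ l, ∑ p, P j l * Q j p * ⟪w l, w p⟫ := by
    unfold fbIP fbMap
    refine Finset.sum_congr rfl fun j _ => ?_
    rw [sum_inner]
    refine Finset.sum_congr rfl fun l _ => ?_
    rw [real_inner_smul_left, inner_sum, Finset.mul_sum]
    refine Finset.sum_congr rfl fun p _ => ?_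
    rw [real_inner_smul_right]; ring
  rw [expand]
  unfold fbQF
  simp only [Matrix.mul_apply, Matrix.transpose_apply, Finset.sum_mul]
  rw [Finset.sum_comm]
  exact Finset.sum_congr rfl fun l _ => Finset.sum_comm

lemma fb_map_one {N : ℕ} (w : Fin N → V) : fbMap 1 w = w := by
  funext j
  simp [fbMap, Matrix.one_apply, ite_smul]

lemma fb_ip_self_nonneg {N : ℕ} (a : Fin N → V) : 0 ≤ fbIP a a :=
  Finset.sum_nonneg fun j _ => real_inner_self_nonneg

lemma fb_qf_posSemidef {N : ℕ} (P : Matrix (Fin N) (Fin N) ℝ) (hP : P.PosSemidef)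
    (w : Fin N → V) : 0 ≤ fbQF P w := by
  obtain ⟨B, hB⟩ : ∃ B : Matrix (Fin N) (Fin N) ℝ, P = Bᴴ * B := by
    open scoped MatrixOrder Matrix.Norms.L2Operator in
    exact CStarAlgebra.nonneg_iff_eq_star_mul_self.mp hP.nonneg
  have hBt : Bᴴ = Bᵀ := rfl
  rw [hB, hBt, ← fb_ip_map_map]
  exact fb_ip_self_nonneg _

lemma fb_matVecT_matVec {m N : ℕ} (A : Matrix (Fin m) (Fin N) ℝ) (w : Fin N → V) :
    matVecT A (matVec A w) = fbMap (Aᵀ * A) w := by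
  funext j
  unfold matVecT matVec fbMap
  simp only [Finset.smul_sum, smul_smul, Matrix.mul_apply, Matrix.transpose_apply,
    Finset.sum_smul]
  exact Finset.sum_comm

lemma fb_qf_gram {m N : ℕ} (A : Matrix (Fin m) (Fin N) ℝ) (w : Fin N → V) :
    fbQF (Aᵀ * A) w = ∑ i, ‖matVec A w i‖ ^ 2 := by
  have expand : ∀ i, ‖matVec A w i‖ ^ 2 = ∑ j, ∑ l, A i j * A i l * ⟪w j, w l⟫ := by
    intro i
    rw [← real_inner_self_eq_norm_sq]
    unfold matVec
    rw [sum_inner]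
    refine Finset.sum_congr rfl fun j _ => ?_
    rw [real_inner_smul_left, inner_sum, Finset.mul_sum]
    refine Finset.sum_congr rfl fun l _ => ?_
    rw [real_inner_smul_right]; ring
  simp only [expand]
  unfold fbQF
  simp only [Matrix.mul_apply, Matrix.transpose_apply, Finset.sum_mul]
  exact Eq.trans (Finset.sum_congr rfl fun j _ => Finset.sum_comm) Finset.sum_comm

lemma fb_adjoint {m N : ℕ} (A : Matrix (Fin m) (Fin N) ℝ) (v : Fin m → V) (d : Fin N → V) :
    fbIP (matVecT A v) d = ∑ i, ⟪v i, matVec A d i⟫ := by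
  unfold fbIP matVecT matVec
  have lhs : ∀ j : Fin N, ⟪∑ i, A i j • v i, d j⟫ = ∑ i, A i j * ⟪v i, d j⟫ := fun j => by
    rw [sum_inner]; exact Finset.sum_congr rfl fun i _ => real_inner_smul_left _ _ _
  have rhs : ∀ i : Fin m, ⟪v i, ∑ j, A i j • d j⟫ = ∑ j, A i j * ⟪v i, d j⟫ := fun i => by
    rw [inner_sum]; exact Finset.sum_congr rfl fun j _ => real_inner_smul_right _ _ _
  simp only [lhs, rhs]
  exact Finset.sum_comm



lemma fb_S_symm {m N : ℕ} (A : Matrix (Fin m) (Fin N) ℝ) : (Aᵀ * A)ᵀ = Aᵀ * A := by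
  rw [Matrix.transpose_mul, Matrix.transpose_transpose]

lemma fb_S_pos {m N : ℕ} (A : Matrix (Fin m) (Fin N) ℝ) (z : Fin N → ℝ) :
    0 ≤ z ⬝ᵥ ((Aᵀ * A) *ᵥ z) := by
  rw [← Matrix.mulVec_mulVec, Matrix.dotProduct_mulVec, Matrix.vecMul_transpose]
  exact fb_dot_self_nonneg (A *ᵥ z)

lemma fb_shift_posSemidef {m N : ℕ} (A : Matrix (Fin m) (Fin N) ℝ) :
    (specNorm (Aᵀ * A) • (Aᵀ * A) - (Aᵀ * A) * (Aᵀ * A)).PosSemidef := by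
  set S := Aᵀ * A with hS
  have hsym : Sᵀ = S := fb_S_symm A
  have hH : S.IsHermitian := Matrix.isHermitian_conjTranspose_mul_self A
  set c := specNorm S with hc
  rw [Matrix.posSemidef_iff_dotProduct_mulVec]
  constructor
  · have h1 : (c • S).IsHermitian := by
      show _ᴴ = _
      rw [Matrix.conjTranspose_smul, hH.eq]
      norm_num
    have h2 : (S * S).IsHermitian := by
      have := hH.pow 2
      rwa [pow_two] at this
    exact h1.sub h2
  · intro z
    have hstar : star z = z := rfl
    have e1 : (c • S - S * S) *ᵥ z = c • (S *ᵥ z) - S *ᵥ (S *ᵥ z) := by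
      rw [Matrix.sub_mulVec, Matrix.smul_mulVec, Matrix.mulVec_mulVec]
    rw [hstar, e1, dotProduct_sub, dotProduct_smul]
    have h2 : z ⬝ᵥ (S *ᵥ (S *ᵥ z)) = (S *ᵥ z) ⬝ᵥ (S *ᵥ z) := fb_sym_move S hsym z _
    rw [h2, smul_eq_mul, sub_nonneg]
    exact fb_key_euclid S hsym (fb_S_pos A) z

lemma fb_qf_sub_smul {N : ℕ} (c : ℝ) (P Q : Matrix (Fin N) (Fin N) ℝ) (w : Fin N → V) :
    fbQF (c • P - Q) w = c * fbQF P w - fbQF Q w := by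
  unfold fbQF
  rw [Finset.mul_sum, ← Finset.sum_sub_distrib]
  refine Finset.sum_congr rfl fun j _ => ?_
  rw [Finset.mul_sum, ← Finset.sum_sub_distrib]
  refine Finset.sum_congr rfl fun l _ => ?_
  simp [Matrix.sub_apply, Matrix.smul_apply, smul_eq_mul]
  ring

lemma fb_grad_contract {m N : ℕ} (A : Matrix (Fin m) (Fin N) ℝ) {τ : ℝ}
    (hτ0 : 0 < τ) (hτ : τ < 2 / specNorm (Aᵀ * A)) (d : Fin N → V) :
    ∑ j, ‖(d - τ • matVecT A (matVec A d)) j‖ ^ 2 ≤ ∑ j, ‖d j‖ ^ 2 := by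
  set S := Aᵀ * A with hS
  set c := specNorm S with hc
  have hc0 : 0 ≤ c := norm_nonneg _
  have hτc : τ * c ≤ 2 := by
    rcases eq_or_lt_of_le hc0 with h | h
    · rw [← h]; linarith
    · have := (lt_div_iff₀ h).mp hτ; linarith
  have hMd : matVecT A (matVec A d) = fbMap S d := fb_matVecT_matVec A d
  have hq1 : fbIP d (fbMap S d) = fbQF S d := by
    have h := fb_ip_map_map (1 : Matrix (Fin N) (Fin N) ℝ) S d
    rw [fb_map_one, Matrix.transpose_one, Matrix.one_mul] at h
    exact h
  have hq2 : fbIP (fbMap S d) (fbMap S d) = fbQF (S * S) d := by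
    rw [fb_ip_map_map, fb_S_symm]
  have hqpos : 0 ≤ fbQF S d := by
    rw [fb_qf_gram]
    exact Finset.sum_nonneg fun i _ => sq_nonneg _
  have hqbound : fbQF (S * S) d ≤ c * fbQF S d := by
    have := fb_qf_posSemidef _ (fb_shift_posSemidef A) d
    rw [fb_qf_sub_smul] at this
    linarith
  have hexpand : ∑ j, ‖(d - τ • matVecT A (matVec A d)) j‖ ^ 2
      = ∑ j, ‖d j‖ ^ 2 - 2 * τ * fbIP d (fbMap S d) + τ ^ 2 * fbIP (fbMap S d) (fbMap S d) := by
    rw [hMd]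
    unfold fbIP
    rw [Finset.mul_sum, Finset.mul_sum, ← Finset.sum_sub_distrib, ← Finset.sum_add_distrib]
    refine Finset.sum_congr rfl fun j _ => ?_
    have : (d - τ • fbMap S d) j = d j - τ • fbMap S d j := rfl
    rw [this, norm_sub_sq_real, real_inner_smul_right, norm_smul]
    rw [Real.norm_eq_abs, abs_of_pos hτ0, mul_pow, real_inner_self_eq_norm_sq]
    ring
  rw [hexpand, hq1, hq2]
  nlinarith [mul_le_mul_of_nonneg_left hqbound (sq_nonneg τ),
    mul_nonneg (by linarith : (0:ℝ) ≤ 2 - τ * c) (mul_nonneg hτ0.le hqpos)]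

lemma fb_st_small {τ : ℝ} {x : V} (h : ‖x‖ ≤ τ) : softThresh τ x = 0 := by
  unfold softThresh
  rw [max_eq_right (by linarith), zero_div, zero_smul]

lemma fb_st_big {τ : ℝ} {x : V} (h : τ < ‖x‖) :
    softThresh τ x = ((‖x‖ - τ) / ‖x‖) • x := by
  unfold softThresh
  rw [max_eq_left (by linarith)]

lemma fb_st_vi {τ : ℝ} (hτ : 0 ≤ τ) (x z : V) (hz : ‖z‖ ≤ τ) :
    ⟪softThresh τ x, z⟫ ≤ ⟪softThresh τ x, x⟫ - ‖softThresh τ x‖ ^ 2 := by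
  rcases le_or_gt ‖x‖ τ with h | h
  · rw [fb_st_small h]; simp
  · have hx0 : (0:ℝ) < ‖x‖ := lt_of_le_of_lt hτ h
    set r := ‖x‖ with hr
    set lam := (r - τ) / r with hlam
    have hlam0 : 0 ≤ lam := div_nonneg (by linarith) hx0.le
    rw [fb_st_big h]
    rw [real_inner_smul_left, real_inner_smul_left, norm_smul, Real.norm_eq_abs,
      abs_of_nonneg hlam0, real_inner_self_eq_norm_sq]
    have hxz : ⟪x, z⟫ ≤ r * τ := by
      calc ⟪x, z⟫ ≤ ‖x‖ * ‖z‖ := real_inner_le_norm x z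
        _ ≤ r * τ := by
            exact mul_le_mul_of_nonneg_left hz hx0.le
    have key : lam * (r * τ) = lam * (r^2) - (lam * r)^2 := by
      rw [hlam]; field_simp; ring
    calc lam * ⟪x, z⟫ ≤ lam * (r * τ) := mul_le_mul_of_nonneg_left hxz hlam0
      _ = lam * (r^2) - (lam * r)^2 := key
      _ = lam * r^2 - (lam * r)^2 := by ring
      _ ≤ lam * r ^ 2 - (lam * ‖x‖) ^ 2 := by rw [← hr]

lemma fb_st_residual {τ : ℝ} (hτ : 0 ≤ τ) (x : V) : ‖x - softThresh τ x‖ ≤ τ := by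
  rcases le_or_gt ‖x‖ τ with h | h
  · rw [fb_st_small h, sub_zero]; exact h
  · have hx0 : (0:ℝ) < ‖x‖ := lt_of_le_of_lt hτ h
    rw [fb_st_big h]
    have : x - ((‖x‖ - τ) / ‖x‖) • x = (1 - (‖x‖ - τ) / ‖x‖) • x := by
      rw [sub_smul, one_smul]
    rw [this, norm_smul, Real.norm_eq_abs]
    have h1 : 1 - (‖x‖ - τ) / ‖x‖ = τ / ‖x‖ := by field_simp; ring
    rw [h1, abs_of_nonneg (div_nonneg hτ hx0.le), div_mul_cancel₀]
    exact hx0.ne'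

lemma fb_st_nonexpansive {τ : ℝ} (hτ : 0 ≤ τ) (a b : V) :
    ‖softThresh τ a - softThresh τ b‖ ≤ ‖a - b‖ := by
  set Ja := softThresh τ a
  set Jb := softThresh τ b
  have h1 : ⟪Ja, b - Jb⟫ ≤ ⟪Ja, a⟫ - ‖Ja‖ ^ 2 :=
    fb_st_vi hτ a (b - Jb) (fb_st_residual hτ b)
  have h2 : ⟪Jb, a - Ja⟫ ≤ ⟪Jb, b⟫ - ‖Jb‖ ^ 2 :=
    fb_st_vi hτ b (a - Ja) (fb_st_residual hτ a)
  have hfirm : ‖Ja - Jb‖ ^ 2 ≤ ⟪Ja - Jb, a - b⟫ := by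
    rw [inner_sub_left, inner_sub_right, inner_sub_right, norm_sub_sq_real]
    rw [inner_sub_right] at h1 h2
    have hcomm : ⟪Jb, Ja⟫ = ⟪Ja, Jb⟫ := real_inner_comm _ _
    nlinarith [h1, h2]
  have hcs : ⟪Ja - Jb, a - b⟫ ≤ ‖Ja - Jb‖ * ‖a - b‖ := real_inner_le_norm _ _
  nlinarith [norm_nonneg (Ja - Jb), norm_nonneg (a - b)]

lemma fb_st_prox {τ : ℝ} (hτ : 0 < τ) (y w : V) :
    ‖softThresh τ y‖ + (1 / (2 * τ)) * ‖softThresh τ y - y‖ ^ 2 ≤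
      ‖w‖ + (1 / (2 * τ)) * ‖w - y‖ ^ 2 := by
  have hwy : (‖y‖ - ‖w‖) ^ 2 ≤ ‖w - y‖ ^ 2 := by
    have h := abs_norm_sub_norm_le (w) (y)
    have h2 : |‖y‖ - ‖w‖| = |‖w‖ - ‖y‖| := abs_sub_comm _ _
    nlinarith [abs_nonneg (‖w‖ - ‖y‖), le_abs_self (‖w‖ - ‖y‖), neg_abs_le (‖w‖ - ‖y‖)]
  have hw0 : 0 ≤ ‖w‖ := norm_nonneg w
  rcases le_or_gt ‖y‖ τ with h | h
  · rw [fb_st_small h]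
    simp only [norm_zero, zero_sub, norm_neg, zero_add]
    have hy0 : 0 ≤ ‖y‖ := norm_nonneg y
    have hP : ‖y‖^2 ≤ 2*τ*‖w‖ + ‖w - y‖^2 := by
      nlinarith [mul_nonneg hw0 (by linarith : (0:ℝ) ≤ τ - ‖y‖), hwy, sq_nonneg ‖w‖]
    calc (1/(2*τ)) * ‖y‖^2 ≤ (1/(2*τ)) * (2*τ*‖w‖ + ‖w - y‖^2) :=
        mul_le_mul_of_nonneg_left hP (by positivity)
      _ = ‖w‖ + (1/(2*τ)) * ‖w - y‖^2 := by field_simp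
  · have hy0 : (0:ℝ) < ‖y‖ := lt_trans hτ h
    rw [fb_st_big h]
    have e1 : ‖((‖y‖ - τ) / ‖y‖) • y‖ = ‖y‖ - τ := by
      rw [norm_smul, Real.norm_eq_abs, abs_of_nonneg (div_nonneg (by linarith) hy0.le),
        div_mul_cancel₀]
      exact hy0.ne'
    have e2 : ‖((‖y‖ - τ) / ‖y‖) • y - y‖ = τ := by
      have : ((‖y‖ - τ) / ‖y‖) • y - y = -((τ / ‖y‖) • y) := by
        have e0 : ((‖y‖ - τ) / ‖y‖) • y - y = ((‖y‖ - τ) / ‖y‖ - 1) • y := by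
          rw [sub_smul, one_smul]
        rw [e0, ← neg_smul]
        congr 1
        field_simp
        ring
      rw [this, norm_neg, norm_smul, Real.norm_eq_abs,
        abs_of_nonneg (div_nonneg hτ.le hy0.le), div_mul_cancel₀]
      exact hy0.ne'
    rw [e1, e2]
    have key : (‖y‖ - τ) + (1 / (2*τ)) * τ^2 ≤ ‖w‖ + (1 / (2*τ)) * (‖y‖ - ‖w‖)^2 := by
      have hP : 2*τ*(‖y‖ - τ) + τ^2 ≤ 2*τ*‖w‖ + (‖y‖ - ‖w‖)^2 := by
        nlinarith [sq_nonneg (‖w‖ - ‖y‖ + τ)]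
      have e3 : (‖y‖ - τ) + (1 / (2*τ)) * τ^2 = (1/(2*τ)) * (2*τ*(‖y‖ - τ) + τ^2) := by
        field_simp
      have e4 : ‖w‖ + (1 / (2*τ)) * (‖y‖ - ‖w‖)^2 = (1/(2*τ)) * (2*τ*‖w‖ + (‖y‖ - ‖w‖)^2) := by
        field_simp
      rw [e3, e4]
      exact mul_le_mul_of_nonneg_left hP (by positivity)
    calc (‖y‖ - τ) + (1 / (2*τ)) * τ^2 ≤ ‖w‖ + (1 / (2*τ)) * (‖y‖ - ‖w‖)^2 := key
      _ ≤ ‖w‖ + (1 / (2*τ)) * ‖w - y‖^2 := by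
          have := one_div_pos.mpr (by linarith : (0:ℝ) < 2*τ)
          nlinarith

/-! ### linearity of matVec / matVecT -/

lemma fb_matVec_add {m N : ℕ} (A : Matrix (Fin m) (Fin N) ℝ) (a b : Fin N → V) :
    matVec A (a + b) = matVec A a + matVec A b := by
  funext i
  simp [matVec, smul_add, Finset.sum_add_distrib]

lemma fb_matVec_smul {m N : ℕ} (A : Matrix (Fin m) (Fin N) ℝ) (t : ℝ) (a : Fin N → V) :
    matVec A (t • a) = t • matVec A a := by
  funext i
  simp only [matVec, Pi.smul_apply, Finset.smul_sum]
  exact Finset.sum_congr rfl fun j _ => smul_comm _ _ _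

lemma fb_matVec_sub {m N : ℕ} (A : Matrix (Fin m) (Fin N) ℝ) (a b : Fin N → V) :
    matVec A (a - b) = matVec A a - matVec A b := by
  funext i
  simp [matVec, smul_sub, Finset.sum_sub_distrib]

lemma fb_matVecT_sub {m N : ℕ} (A : Matrix (Fin m) (Fin N) ℝ) (a b : Fin m → V) :
    matVecT A (a - b) = matVecT A a - matVecT A b := by
  funext j
  simp [matVecT, smul_sub, Finset.sum_sub_distrib]

lemma fb_mnorm2_sq {N : ℕ} (z : Fin N → V) : mnorm2 z ^ 2 = ∑ j, ‖z j‖ ^ 2 := by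
  unfold mnorm2
  rw [Real.sq_sqrt (Finset.sum_nonneg fun j _ => sq_nonneg _)]

/-! ### first-order optimality -/

lemma fb_first_order {m N : ℕ} (A : Matrix (Fin m) (Fin N) ℝ) (u : Fin m → V)
    (xstar : Fin N → V)
    (hmin : ∀ z : Fin N → V,
        mnorm1 xstar + (1 / 2) * mnorm2 (matVec A xstar - u) ^ 2 ≤
          mnorm1 z + (1 / 2) * mnorm2 (matVec A z - u) ^ 2)
    (z : Fin N → V) :
    0 ≤ mnorm1 z - mnorm1 xstar + fbIP (matVecT A (matVec A xstar - u)) (z - xstar) := by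
  set d : Fin N → V := z - xstar with hd
  set g : Fin N → V := matVecT A (matVec A xstar - u) with hg
  set W : ℝ := fbIP g d with hWdef
  have hW : W = ∑ i, ⟪(matVec A xstar - u) i, matVec A d i⟫ := fb_adjoint A _ d
  set C : ℝ := ∑ i, ‖matVec A d i‖ ^ 2 with hC
  have hC0 : 0 ≤ C := Finset.sum_nonneg fun i _ => sq_nonneg _
  set E : ℝ := mnorm1 z - mnorm1 xstar + W with hE
  have hmain : ∀ t : ℝ, 0 < t → t ≤ 1 → 0 ≤ E + t * (C / 2) := by
    intro t ht0 ht1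
    have h := hmin (xstar + t • d)
    have h1 : mnorm1 (xstar + t • d) ≤ (1 - t) * mnorm1 xstar + t * mnorm1 z := by
      unfold mnorm1
      rw [Finset.mul_sum, Finset.mul_sum, ← Finset.sum_add_distrib]
      refine Finset.sum_le_sum fun j _ => ?_
      have e : (xstar + t • d) j = (1 - t) • xstar j + t • z j := by
        show xstar j + t • d j = _
        have : d j = z j - xstar j := rfl
        rw [this, smul_sub, sub_smul, one_smul]
        abel
      rw [e]
      calc ‖(1 - t) • xstar j + t • z j‖ ≤ ‖(1 - t) • xstar j‖ + ‖t • z j‖ := norm_add_le _ _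
        _ = (1 - t) * ‖xstar j‖ + t * ‖z j‖ := by
            rw [norm_smul, norm_smul, Real.norm_eq_abs, Real.norm_eq_abs,
              abs_of_nonneg (by linarith), abs_of_nonneg ht0.le]
    have h2 : mnorm2 (matVec A (xstar + t • d) - u) ^ 2
        = mnorm2 (matVec A xstar - u) ^ 2 + 2 * t * W + t ^ 2 * C := by
      rw [fb_mnorm2_sq, fb_mnorm2_sq, hW, hC]
      rw [Finset.mul_sum, Finset.mul_sum, ← Finset.sum_add_distrib, ← Finset.sum_add_distrib]
      refine Finset.sum_congr rfl fun i _ => ?_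
      have e : (matVec A (xstar + t • d) - u) i = (matVec A xstar - u) i + t • matVec A d i := by
        rw [fb_matVec_add, fb_matVec_smul]
        simp only [Pi.sub_apply, Pi.add_apply, Pi.smul_apply]
        abel
      rw [e, norm_add_sq_real, real_inner_smul_right, norm_smul, Real.norm_eq_abs,
        abs_of_pos ht0, mul_pow]
      ring
    rw [h2] at h
    have h3 : 0 ≤ t * E + t ^ 2 * (C / 2) := by
      have := le_trans h (by linarith : mnorm1 (xstar + t • d) +
          1 / 2 * (mnorm2 (matVec A xstar - u) ^ 2 + 2 * t * W + t ^ 2 * C)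
          ≤ (1 - t) * mnorm1 xstar + t * mnorm1 z +
            1 / 2 * (mnorm2 (matVec A xstar - u) ^ 2 + 2 * t * W + t ^ 2 * C))
      rw [hE]
      nlinarith [this]
    nlinarith [h3, mul_pos ht0 ht0]
  by_contra hneg
  push_neg at hneg
  have hEneg : E < 0 := by
    rw [hE]; exact hneg
  set t : ℝ := min 1 ((-E) / (C + 1)) with ht
  have htpos : 0 < t := lt_min one_pos (div_pos (by linarith) (by linarith))
  have ht1 : t ≤ 1 := min_le_left _ _
  have h := hmain t htpos ht1
  have ht2 : t ≤ (-E) / (C + 1) := min_le_right _ _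
  have h3 : t * (C / 2) ≤ ((-E) / (C + 1)) * (C / 2) :=
    mul_le_mul_of_nonneg_right ht2 (by linarith)
  have h4 : ((-E) / (C + 1)) * (C / 2) < -E := by
    rw [div_mul_eq_mul_div, div_lt_iff₀ (by linarith)]
    nlinarith
  linarith

/-! ### the minimizer is a fixed point -/

lemma fb_fixed_point {m N : ℕ} (A : Matrix (Fin m) (Fin N) ℝ) (u : Fin m → V) {τ : ℝ}
    (hτ0 : 0 < τ)
    (xstar : Fin N → V)
    (hmin : ∀ z : Fin N → V,
        mnorm1 xstar + (1 / 2) * mnorm2 (matVec A xstar - u) ^ 2 ≤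
          mnorm1 z + (1 / 2) * mnorm2 (matVec A z - u) ^ 2) :
    Sop τ A u xstar = xstar := by
  set g : Fin N → V := matVecT A (matVec A xstar - u) with hg
  set s : Fin N → V := Sop τ A u xstar with hs
  have hsj : ∀ j, s j = softThresh τ (xstar j - τ • g j) := fun j => rfl
  have hQ : ∑ j, (‖s j‖ + (1 / (2 * τ)) * ‖s j - (xstar j - τ • g j)‖ ^ 2)
      ≤ ∑ j, (‖xstar j‖ + (1 / (2 * τ)) * ‖xstar j - (xstar j - τ • g j)‖ ^ 2) :=
    Finset.sum_le_sum fun j _ => by rw [hsj j]; exact fb_st_prox hτ0 _ _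
  set D : ℝ := ∑ j, ‖s j - xstar j‖ ^ 2 with hD
  have hD0 : 0 ≤ D := Finset.sum_nonneg fun j _ => sq_nonneg _
  set G2 : ℝ := ∑ j, ‖g j‖ ^ 2 with hG2
  set W : ℝ := fbIP g (s - xstar) with hWdef
  have hWsum : W = ∑ j, ⟪s j - xstar j, g j⟫ := by
    rw [hWdef]
    unfold fbIP
    exact Finset.sum_congr rfl fun j _ => real_inner_comm _ _
  have expand1 : ∀ j, ‖s j - (xstar j - τ • g j)‖ ^ 2
      = ‖s j - xstar j‖ ^ 2 + 2 * τ * ⟪s j - xstar j, g j⟫ + τ ^ 2 * ‖g j‖ ^ 2 := by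
    intro j
    have e : s j - (xstar j - τ • g j) = (s j - xstar j) + τ • g j := by abel
    rw [e, norm_add_sq_real, real_inner_smul_right, norm_smul, Real.norm_eq_abs,
      abs_of_pos hτ0, mul_pow]
    ring
  have expand2 : ∀ j, ‖xstar j - (xstar j - τ • g j)‖ ^ 2 = τ ^ 2 * ‖g j‖ ^ 2 := by
    intro j
    have e : xstar j - (xstar j - τ • g j) = τ • g j := by abel
    rw [e, norm_smul, Real.norm_eq_abs, abs_of_pos hτ0, mul_pow]
  have sumL : ∑ j, (‖s j‖ + (1 / (2 * τ)) * ‖s j - (xstar j - τ • g j)‖ ^ 2)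
      = mnorm1 s + (1 / (2 * τ)) * D + W + (1 / (2 * τ)) * τ ^ 2 * G2 := by
    unfold mnorm1
    rw [hD, hG2, hWsum, Finset.mul_sum, Finset.mul_sum]
    rw [← Finset.sum_add_distrib, ← Finset.sum_add_distrib, ← Finset.sum_add_distrib]
    refine Finset.sum_congr rfl fun j _ => ?_
    rw [expand1 j]
    field_simp
    ring
  have sumR : ∑ j, (‖xstar j‖ + (1 / (2 * τ)) * ‖xstar j - (xstar j - τ • g j)‖ ^ 2)
      = mnorm1 xstar + (1 / (2 * τ)) * τ ^ 2 * G2 := by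
    unfold mnorm1
    rw [hG2, Finset.mul_sum, ← Finset.sum_add_distrib]
    refine Finset.sum_congr rfl fun j _ => ?_
    rw [expand2 j]
    ring
  rw [sumL, sumR] at hQ
  have hE : 0 ≤ mnorm1 s - mnorm1 xstar + W := fb_first_order A u xstar hmin s
  have hDle : (1 / (2 * τ)) * D ≤ 0 := by linarith
  have hDzero : D = 0 := le_antisymm (by
    have h2τ : 0 < 1 / (2 * τ) := by positivity
    nlinarith) hD0
  have hzero : ∀ j ∈ Finset.univ, ‖s j - xstar j‖ ^ 2 = 0 := by
    rw [← Finset.sum_eq_zero_iff_of_nonneg fun j _ => sq_nonneg ‖s j - xstar j‖]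
    exact hDzero
  funext j
  have := hzero j (Finset.mem_univ j)
  have hnz : ‖s j - xstar j‖ = 0 := by
    nlinarith [norm_nonneg (s j - xstar j)]
  rw [← sub_eq_zero]
  exact norm_eq_zero.mp hnz

end FBVector

/-- the forward-backward iterates are Fejér monotone with respect to any
minimizer `x*` of `F(z) = ‖z‖_{V,1} + (1/2)‖Az − u‖²_{V,2}`. -/
theorem forward_backward_fejer_monotone
    [NormedAddCommGroup V] [InnerProductSpace ℝ V] [CompleteSpace V]
    {N m : ℕ} (hN : 0 < N) (hm : 0 < m)
    (A : Matrix (Fin m) (Fin N) ℝ) (u : Fin m → V) (τ : ℝ)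
    (hτ0 : 0 < τ) (hτ : τ < 2 / specNorm (A.transpose * A))
    (xstar : Fin N → V)
    (hmin : ∀ z : Fin N → V,
        mnorm1 xstar + (1 / 2) * mnorm2 (matVec A xstar - u) ^ 2 ≤
          mnorm1 z + (1 / 2) * mnorm2 (matVec A z - u) ^ 2)
    (x : ℕ → Fin N → V) (hiter : ∀ k, x (k + 1) = Sop τ A u (x k)) (k : ℕ) :
    mnorm2 (x (k + 1) - xstar) ≤ mnorm2 (x k - xstar) := by
  have hfix : Sop τ A u xstar = xstar := fb_fixed_point A u hτ0 xstar hmin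
  rw [hiter k]
  set a : Fin N → V := x k with ha
  set d : Fin N → V := a - xstar with hd
  set p : Fin N → V := a - τ • matVecT A (matVec A a - u) with hp
  set q : Fin N → V := xstar - τ • matVecT A (matVec A xstar - u) with hq
  have hpq : p - q = d - τ • matVecT A (matVec A d) := by
    have h1 : matVec A a - u - (matVec A xstar - u) = matVec A d := by
      rw [hd, fb_matVec_sub]; abel
    have h2 : matVecT A (matVec A a - u) - matVecT A (matVec A xstar - u)
        = matVecT A (matVec A d) := by rw [← fb_matVecT_sub, h1]
    calc p - q
        = (a - xstar) - τ • (matVecT A (matVec A a - u) - matVecT A (matVec A xstar - u)) := by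
          rw [hp, hq, smul_sub]; abel
      _ = d - τ • matVecT A (matVec A d) := by rw [h2, hd]
  unfold mnorm2
  apply Real.sqrt_le_sqrt
  calc ∑ j, ‖(Sop τ A u a - xstar) j‖ ^ 2
      ≤ ∑ j, ‖(d - τ • matVecT A (matVec A d)) j‖ ^ 2 := by
        refine Finset.sum_le_sum fun j _ => ?_
        have e1 : (Sop τ A u a - xstar) j = softThresh τ (p j) - softThresh τ (q j) := by
          calc (Sop τ A u a - xstar) j = Sop τ A u a j - xstar j := rfl
            _ = Sop τ A u a j - Sop τ A u xstar j := by rw [hfix]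
            _ = softThresh τ (p j) - softThresh τ (q j) := rfl
        have e2 : p j - q j = (d - τ • matVecT A (matVec A d)) j := congrFun hpq j
        rw [e1, ← e2]
        exact pow_le_pow_left₀ (norm_nonneg _) (fb_st_nonexpansive hτ0.le _ _) 2
    _ ≤ ∑ j, ‖d j‖ ^ 2 := fb_grad_contract A hτ0 hτ d
end

section
/- Let V be a real Hilbert space, let N, m be positive integers, let A be an m×N real matrix, u ∈ V^m, and μ > 0. Then the convex functional F(z) := ‖z‖_{V,1} + (μ/2)‖Az − u‖²_{V,2} attains its minimum over V^N; that is, there exists x* ∈ V^N with F(x*) ≤ F(z) for all z ∈ V^N. -/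
open scoped BigOperators
open Filter

variable {V : Type*}

lemma mnorm2_sq_s10 [NormedAddCommGroup V] {N : ℕ} (z : Fin N → V) :
    mnorm2 z ^ 2 = ∑ j, ‖z j‖ ^ 2 := by
  rw [mnorm2, Real.sq_sqrt]
  exact Finset.sum_nonneg fun j _ => by positivity

/-- the functional `F(z) = ‖z‖_{V,1} + (μ/2)‖Az − u‖²_{V,2}` attains its
minimum over `V^N`. -/
theorem functional_attains_minimum
    [NormedAddCommGroup V] [InnerProductSpace ℝ V] [CompleteSpace V]
    {N m : ℕ} (hN : 0 < N) (hm : 0 < m)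
    (A : Matrix (Fin m) (Fin N) ℝ) (u : Fin m → V) (μ : ℝ) (hμ : 0 < μ) :
    ∃ xstar : Fin N → V, ∀ z : Fin N → V,
      mnorm1 xstar + (μ / 2) * mnorm2 (matVec A xstar - u) ^ 2 ≤
        mnorm1 z + (μ / 2) * mnorm2 (matVec A z - u) ^ 2 := by
  classical
  set W : Submodule ℝ V := Submodule.span ℝ (Set.range u) with hW
  haveI : FiniteDimensional ℝ W := FiniteDimensional.span_of_finite ℝ (Set.finite_range u)
  set P := W.orthogonalProjectionOnto with hP
  have hPle : ∀ v : V, ‖(P v : V)‖ ≤ ‖v‖ := by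
    intro v
    calc ‖(P v : V)‖ = ‖P v‖ := rfl
    _ ≤ ‖P‖ * ‖v‖ := P.le_opNorm v
    _ ≤ 1 * ‖v‖ := mul_le_mul_of_nonneg_right (Submodule.orthogonalProjectionOnto_norm_le W) (norm_nonneg v)
    _ = ‖v‖ := one_mul _
  -- the functional expressed without sqrt
  set F : (Fin N → V) → ℝ :=
    fun z => mnorm1 z + (μ / 2) * ∑ i, ‖(matVec A z - u) i‖ ^ 2 with hFdef
  have hFeq : ∀ z : Fin N → V,
      F z = mnorm1 z + (μ / 2) * mnorm2 (matVec A z - u) ^ 2 := by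
    intro z; rw [mnorm2_sq_s10]
  -- the restriction of F to W-valued tuples
  set ι : (Fin N → W) → (Fin N → V) := fun w j => (w j : V) with hι
  have hιcont : Continuous ι := by
    apply continuous_pi; intro j
    exact continuous_subtype_val.comp (continuous_apply j)
  have hFcont : Continuous F := by
    apply Continuous.add
    · exact continuous_finset_sum _ fun j _ => (continuous_apply j).norm
    · apply Continuous.mul continuous_const
      apply continuous_finset_sum _ fun i _ => ?_
      have : Continuous fun z : Fin N → V => (matVec A z - u) i := by
        simp only [Pi.sub_apply, matVec]
        exact Continuous.sub (continuous_finset_sum _ fun j _ =>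
          (continuous_apply j).const_smul _) continuous_const
      exact (this.norm).pow 2
  have hcoer : Tendsto (F ∘ ι) (cocompact (Fin N → W)) atTop := by
    apply tendsto_atTop_mono _ tendsto_norm_cocompact_atTop
    intro w
    haveI : Nonempty (Fin N) := Fin.pos_iff_nonempty.mp hN
    have h1 : ‖w‖ ≤ mnorm1 (ι w) := by
      have hne : (Finset.univ : Finset (Fin N)).Nonempty := Finset.univ_nonempty
      obtain ⟨j0, hj0, hj0'⟩ := Finset.exists_mem_eq_sup' hne (fun j => ‖w j‖)
      calc ‖w‖ ≤ ‖w j0‖ := by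
            rw [pi_norm_le_iff_of_nonneg (norm_nonneg _)]
            intro i
            exact hj0' ▸ Finset.le_sup' (fun j => ‖w j‖) (Finset.mem_univ i)
        _ ≤ ∑ j, ‖w j‖ := Finset.single_le_sum (fun j _ => norm_nonneg _) (Finset.mem_univ _)
        _ = mnorm1 (ι w) := by simp [mnorm1, ι]
    have h2 : 0 ≤ (μ / 2) * ∑ i, ‖(matVec A (ι w) - u) i‖ ^ 2 := by positivity
    calc ‖w‖ ≤ mnorm1 (ι w) := h1
      _ ≤ F (ι w) := le_add_of_nonneg_right h2
  obtain ⟨w0, hw0⟩ := (hFcont.comp hιcont).exists_forall_le hcoer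
  refine ⟨ι w0, fun z => ?_⟩
  rw [← hFeq, ← hFeq]
  have key : F (ι fun j => P (z j)) ≤ F z := by
    apply add_le_add
    · exact Finset.sum_le_sum fun j _ => hPle (z j)
    · apply mul_le_mul_of_nonneg_left _ (by positivity)
      apply Finset.sum_le_sum fun i _ => ?_
      have hui : (P (u i) : V) = u i :=
        Submodule.starProjection_eq_self_iff.mpr (Submodule.subset_span ⟨i, rfl⟩)
      have heq : (matVec A (ι fun j => P (z j)) - u) i = (P ((matVec A z - u) i) : V) := by
        simp only [Pi.sub_apply, matVec, ι, map_sub, map_sum, map_smul]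
        push_cast
        rw [hui]
      rw [heq]
      exact pow_le_pow_left₀ (norm_nonneg _) (hPle _) 2
  exact le_trans (hw0 fun j => P (z j)) key
end
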